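/- arXiv:2010.08588 — 3 statements merged into one kernel-verified Lean document; each statement's English description precedes it below -/
import Mathlib

section
/- For distinguishing two real qubit pure states |ψ₁⟩, |ψ₂⟩ with equal priors 1/2, the Helstrom bound gives optimal success probability (1 + √(1 − |⟨ψ₁|ψ₂⟩|²))/2, i.e., for any two-outcome POVM {Π, I−Π}, (1/2)⟨ψ₁|Π|ψ₁⟩ + (1/2)⟨ψ₂|(I−Π)|ψ₂⟩ ≤ (1 + √(1 − |⟨ψ₁|ψ₂⟩|²))/2. -/
open scoped ComplexOrder
open Matrix

private lemma cs_dot (x y : Fin 2 → ℂ) :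
    ‖star x ⬝ᵥ y‖ ^ 2 ≤ (star x ⬝ᵥ x).re * (star y ⬝ᵥ y).re := by
  set X := (WithLp.equiv 2 (Fin 2 → ℂ)).symm x
  set Y := (WithLp.equiv 2 (Fin 2 → ℂ)).symm y
  have h := norm_inner_le_norm (𝕜 := ℂ) X Y
  have hXY : (inner ℂ X Y : ℂ) = star x ⬝ᵥ y := by rw [dotProduct_comm]; rfl
  have hX : ‖X‖ ^ 2 = (star x ⬝ᵥ x).re := by
    rw [← inner_self_eq_norm_sq (𝕜 := ℂ) X, show (inner ℂ X X : ℂ) = star x ⬝ᵥ x by rw [dotProduct_comm]; rfl]; rfl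
  have hY : ‖Y‖ ^ 2 = (star y ⬝ᵥ y).re := by
    rw [← inner_self_eq_norm_sq (𝕜 := ℂ) Y, show (inner ℂ Y Y : ℂ) = star y ⬝ᵥ y by rw [dotProduct_comm]; rfl]; rfl
  calc ‖star x ⬝ᵥ y‖ ^ 2 = ‖(inner ℂ X Y : ℂ)‖ ^ 2 := by
        rw [hXY]
    _ ≤ (‖X‖ * ‖Y‖) ^ 2 := pow_le_pow_left₀ (norm_nonneg _) h 2
    _ = (star x ⬝ᵥ x).re * (star y ⬝ᵥ y).re := by rw [mul_pow, hX, hY]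

private lemma dot_factor {M B : Matrix (Fin 2) (Fin 2) ℂ} (hB : M = Bᴴ * B)
    (u v : Fin 2 → ℂ) :
    star u ⬝ᵥ M.mulVec v = star (B.mulVec u) ⬝ᵥ (B.mulVec v) := by
  rw [hB, ← mulVec_mulVec, dotProduct_mulVec, ← star_mulVec]

/-- Helstrom bound for two pure states with equal priors: for unit vectors `ψ₁, ψ₂ ∈ ℂ²` and any
two-outcome POVM `{E, I − E}`, the success probability is at most
`(1 + √(1 − |⟨ψ₁|ψ₂⟩|²))/2`. -/
theorem helstrom_pure_states (ψ₁ ψ₂ : Fin 2 → ℂ)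
    (h₁ : star ψ₁ ⬝ᵥ ψ₁ = 1) (h₂ : star ψ₂ ⬝ᵥ ψ₂ = 1)
    (E : Matrix (Fin 2) (Fin 2) ℂ) (hE : E.PosSemidef) (hE' : (1 - E).PosSemidef) :
    (1/2) * (star ψ₁ ⬝ᵥ E.mulVec ψ₁).re + (1/2) * (star ψ₂ ⬝ᵥ (1 - E).mulVec ψ₂).re ≤
      (1 + Real.sqrt (1 - ‖star ψ₁ ⬝ᵥ ψ₂‖ ^ 2)) / 2 := by
  obtain ⟨B, hB⟩ : ∃ B : Matrix (Fin 2) (Fin 2) ℂ, E = Bᴴ * B := by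
    open scoped MatrixOrder in exact CStarAlgebra.nonneg_iff_eq_star_mul_self.mp hE.nonneg
  obtain ⟨C, hC⟩ : ∃ C : Matrix (Fin 2) (Fin 2) ℂ, 1 - E = Cᴴ * C := by
    open scoped MatrixOrder in exact CStarAlgebra.nonneg_iff_eq_star_mul_self.mp hE'.nonneg
  set a := (star ψ₁ ⬝ᵥ E.mulVec ψ₁).re with ha_def
  set b := (star ψ₂ ⬝ᵥ E.mulVec ψ₂).re with hb_def
  set c := ‖star ψ₁ ⬝ᵥ ψ₂‖ with hc_def
  have hsplit : ∀ u v : Fin 2 → ℂ,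
      star u ⬝ᵥ (1 - E).mulVec v = star u ⬝ᵥ v - star u ⬝ᵥ E.mulVec v := by
    intro u v
    rw [sub_mulVec, one_mulVec, dotProduct_sub]
  have ha0 : 0 ≤ a := ((Complex.nonneg_iff).mp (hE.dotProduct_mulVec_nonneg ψ₁)).1
  have hb0 : 0 ≤ b := ((Complex.nonneg_iff).mp (hE.dotProduct_mulVec_nonneg ψ₂)).1
  have ha1 : a ≤ 1 := by
    have := ((Complex.nonneg_iff).mp (hE'.dotProduct_mulVec_nonneg ψ₁)).1
    rw [hsplit ψ₁ ψ₁, h₁] at this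
    simp only [Complex.sub_re, Complex.one_re] at this
    linarith
  have hb1 : b ≤ 1 := by
    have := ((Complex.nonneg_iff).mp (hE'.dotProduct_mulVec_nonneg ψ₂)).1
    rw [hsplit ψ₂ ψ₂, h₂] at this
    simp only [Complex.sub_re, Complex.one_re] at this
    linarith
  have hcs1 : ‖star ψ₁ ⬝ᵥ E.mulVec ψ₂‖ ^ 2 ≤ a * b := by
    rw [dot_factor hB, ha_def, hb_def, dot_factor hB ψ₁ ψ₁, dot_factor hB ψ₂ ψ₂]
    exact cs_dot _ _
  have h1a : (star ψ₁ ⬝ᵥ (1 - E).mulVec ψ₁).re = 1 - a := by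
    rw [hsplit, h₁]; simp [ha_def]
  have h1b : (star ψ₂ ⬝ᵥ (1 - E).mulVec ψ₂).re = 1 - b := by
    rw [hsplit, h₂]; simp [hb_def]
  have hcs2 : ‖star ψ₁ ⬝ᵥ (1 - E).mulVec ψ₂‖ ^ 2 ≤ (1 - a) * (1 - b) := by
    rw [← h1a, ← h1b, dot_factor hC, dot_factor hC ψ₁ ψ₁, dot_factor hC ψ₂ ψ₂]
    exact cs_dot _ _
  have htri : c ≤ ‖star ψ₁ ⬝ᵥ E.mulVec ψ₂‖
      + ‖star ψ₁ ⬝ᵥ (1 - E).mulVec ψ₂‖ := by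
    have hsum : star ψ₁ ⬝ᵥ ψ₂ = star ψ₁ ⬝ᵥ E.mulVec ψ₂ + star ψ₁ ⬝ᵥ (1 - E).mulVec ψ₂ := by
      rw [hsplit]; ring
    rw [hc_def, hsum]
    exact norm_add_le _ _
  rw [h1b]
  have hc0 : 0 ≤ c := norm_nonneg _
  set p := Real.sqrt (a * b) with hp_def
  set q := Real.sqrt ((1 - a) * (1 - b)) with hq_def
  have hp0 : 0 ≤ p := Real.sqrt_nonneg _
  have hq0 : 0 ≤ q := Real.sqrt_nonneg _
  have hab : (0:ℝ) ≤ a * b := mul_nonneg ha0 hb0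
  have hab' : (0:ℝ) ≤ (1 - a) * (1 - b) := mul_nonneg (by linarith) (by linarith)
  have hp2 : p ^ 2 = a * b := Real.sq_sqrt hab
  have hq2 : q ^ 2 = (1 - a) * (1 - b) := Real.sq_sqrt hab'
  have hcle : c ≤ p + q := by
    have e1 : ‖star ψ₁ ⬝ᵥ E.mulVec ψ₂‖ ≤ p := Real.le_sqrt_of_sq_le hcs1
    have e2 : ‖star ψ₁ ⬝ᵥ (1 - E).mulVec ψ₂‖ ≤ q := Real.le_sqrt_of_sq_le hcs2
    linarith
  -- key real inequality via r, s
  set r := Real.sqrt (a * (1 - a)) with hr_def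
  set s := Real.sqrt (b * (1 - b)) with hs_def
  have hr2 : r ^ 2 = a * (1 - a) := Real.sq_sqrt (mul_nonneg ha0 (by linarith))
  have hs2 : s ^ 2 = b * (1 - b) := Real.sq_sqrt (mul_nonneg hb0 (by linarith))
  have hpq : p * q = r * s := by
    rw [hp_def, hq_def, hr_def, hs_def, ← Real.sqrt_mul hab, ← Real.sqrt_mul (mul_nonneg ha0 (by linarith))]
    ring_nf
  have hrs : 2 * (r * s) ≤ a * (1 - a) + b * (1 - b) := by
    nlinarith [sq_nonneg (r - s)]
  have hc2 : c ^ 2 ≤ (p + q) ^ 2 := pow_le_pow_left₀ hc0 hcle 2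
  have hkey : (a - b) ^ 2 ≤ 1 - c ^ 2 := by nlinarith [hc2, hp2, hq2, hpq, hrs]
  have hfin : a - b ≤ Real.sqrt (1 - c ^ 2) := Real.le_sqrt_of_sq_le hkey
  linarith
end

section
/- For any two density matrices ρ₁, ρ₂ with priors q, 1−q and any two-outcome POVM {Π, I−Π}, the success probability satisfies q·Tr(Πρ₁) + (1−q)·Tr((I−Π)ρ₂) ≤ (1 + ‖qρ₁ − (1−q)ρ₂‖₁)/2, where ‖·‖₁ is the trace norm. -/
open scoped ComplexOrder
open Matrix

/-- The trace norm `‖A‖₁ = Tr √(A†A)` of a complex square matrix. -/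
noncomputable def traceNorm {d : ℕ} (A : Matrix (Fin d) (Fin d) ℂ) : ℝ :=
  (((Matrix.posSemidef_conjTranspose_mul_self A).1.eigenvectorUnitary.1 *
    diagonal (fun i => ((Real.sqrt
      ((Matrix.posSemidef_conjTranspose_mul_self A).1.eigenvalues i) : ℝ) : ℂ)) *
    (star (Matrix.posSemidef_conjTranspose_mul_self A).1.eigenvectorUnitary :
      Matrix (Fin d) (Fin d) ℂ)).trace).re

/-- Helstrom bound for binary state discrimination: for density matrices `ρ₁, ρ₂` with priors
`q, 1 − q` and any two-outcome POVM `{E, I − E}`,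
`q Tr(Eρ₁) + (1−q) Tr((I−E)ρ₂) ≤ (1 + ‖qρ₁ − (1−q)ρ₂‖₁)/2`. -/
theorem helstrom_bound {d : ℕ} (ρ₁ ρ₂ : Matrix (Fin d) (Fin d) ℂ)
    (hρ₁ : ρ₁.PosSemidef) (hρ₂ : ρ₂.PosSemidef)
    (htr₁ : ρ₁.trace = 1) (htr₂ : ρ₂.trace = 1)
    (q : ℝ) (hq0 : 0 ≤ q) (hq1 : q ≤ 1)
    (E : Matrix (Fin d) (Fin d) ℂ) (hE : E.PosSemidef) (hE' : (1 - E).PosSemidef) :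
    q * ((E * ρ₁).trace.re) + (1 - q) * (((1 - E) * ρ₂).trace.re) ≤
      (1 + traceNorm ((q : ℂ) • ρ₁ - ((1 - q : ℝ) : ℂ) • ρ₂)) / 2 := by
  set Δ : Matrix (Fin d) (Fin d) ℂ := (q : ℂ) • ρ₁ - ((1 - q : ℝ) : ℂ) • ρ₂ with hΔdef
  have hΔ : Δ.IsHermitian := by
    simp only [IsHermitian, hΔdef, conjTranspose_sub, conjTranspose_smul, hρ₁.1.eq, hρ₂.1.eq,
      Complex.star_def, Complex.conj_ofReal]
  set U : Matrix (Fin d) (Fin d) ℂ := (hΔ.eigenvectorUnitary : Matrix (Fin d) (Fin d) ℂ) with hUdef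
  set lam : Fin d → ℝ := hΔ.eigenvalues with hlamdef
  have hU1 : star U * U = 1 := mem_unitaryGroup_iff'.mp hΔ.eigenvectorUnitary.2
  have hspec : Δ = U * diagonal (RCLike.ofReal ∘ lam) * star U := hΔ.spectral_theorem
  set S : Matrix (Fin d) (Fin d) ℂ :=
    U * diagonal (RCLike.ofReal ∘ fun i => |lam i|) * star U with hSdef
  have hSpsd : S.PosSemidef := by
    rw [hSdef, star_eq_conjTranspose U]
    exact PosSemidef.mul_mul_conjTranspose_same
      (posSemidef_diagonal_iff.mpr fun i => by
        simpa using RCLike.ofReal_nonneg.mpr (abs_nonneg (lam i))) U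
  have hmulDiag : ∀ f g : Fin d → ℝ,
      (U * diagonal (RCLike.ofReal ∘ f) * star U) * (U * diagonal (RCLike.ofReal ∘ g) * star U) =
        U * diagonal (fun i => ((f i * g i : ℝ) : ℂ)) * star U := by
    intro f g
    calc (U * diagonal (RCLike.ofReal ∘ f) * star U) * (U * diagonal (RCLike.ofReal ∘ g) * star U)
        = U * (diagonal (RCLike.ofReal ∘ f) * (star U * U) * diagonal (RCLike.ofReal ∘ g)) * star U := by
          simp [Matrix.mul_assoc]
      _ = U * diagonal (fun i => ((f i * g i : ℝ) : ℂ)) * star U := by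
          rw [hU1, Matrix.mul_one, diagonal_mul_diagonal]
          congr 1
          · congr 1
            funext i
            push_cast
            rfl
  have hSsq : S ^ 2 = Δᴴ * Δ := by
    rw [hΔ.eq, pow_two, hSdef, hspec, hmulDiag, hmulDiag]
    have : (fun i => ((|lam i| * |lam i| : ℝ) : ℂ)) = (fun i => ((lam i * lam i : ℝ) : ℂ)) := by
      funext i; rw [abs_mul_abs_self]
    rw [this]
  have hsqrt : S = (Matrix.posSemidef_conjTranspose_mul_self Δ).1.eigenvectorUnitary.1 *
      diagonal (fun i => ((Real.sqrt
        ((Matrix.posSemidef_conjTranspose_mul_self Δ).1.eigenvalues i) : ℝ) : ℂ)) *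
      (star (Matrix.posSemidef_conjTranspose_mul_self Δ).1.eigenvectorUnitary :
        Matrix (Fin d) (Fin d) ℂ) := by
    have hA := Matrix.posSemidef_conjTranspose_mul_self Δ
    have hV1 : (star hA.1.eigenvectorUnitary : Matrix (Fin d) (Fin d) ℂ) *
        hA.1.eigenvectorUnitary.1 = 1 := mem_unitaryGroup_iff'.mp hA.1.eigenvectorUnitary.2
    have hTpsd : (hA.1.eigenvectorUnitary.1 *
        diagonal (fun i => ((Real.sqrt (hA.1.eigenvalues i) : ℝ) : ℂ)) *
        (star hA.1.eigenvectorUnitary : Matrix (Fin d) (Fin d) ℂ)).PosSemidef := by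
      rw [star_eq_conjTranspose]
      exact PosSemidef.mul_mul_conjTranspose_same
        (posSemidef_diagonal_iff.mpr fun i => by
          simpa using Real.sqrt_nonneg (hA.1.eigenvalues i)) _
    have hTT : (hA.1.eigenvectorUnitary.1 *
        diagonal (fun i => ((Real.sqrt (hA.1.eigenvalues i) : ℝ) : ℂ)) *
        (star hA.1.eigenvectorUnitary : Matrix (Fin d) (Fin d) ℂ)) *
        (hA.1.eigenvectorUnitary.1 *
        diagonal (fun i => ((Real.sqrt (hA.1.eigenvalues i) : ℝ) : ℂ)) *
        (star hA.1.eigenvectorUnitary : Matrix (Fin d) (Fin d) ℂ)) = Δᴴ * Δ := by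
      calc _ = hA.1.eigenvectorUnitary.1 *
            (diagonal (fun i => ((Real.sqrt (hA.1.eigenvalues i) : ℝ) : ℂ)) *
            ((star hA.1.eigenvectorUnitary : Matrix (Fin d) (Fin d) ℂ) *
              hA.1.eigenvectorUnitary.1) *
            diagonal (fun i => ((Real.sqrt (hA.1.eigenvalues i) : ℝ) : ℂ))) *
            (star hA.1.eigenvectorUnitary : Matrix (Fin d) (Fin d) ℂ) := by
            simp only [Matrix.mul_assoc]
        _ = hA.1.eigenvectorUnitary.1 * diagonal (RCLike.ofReal ∘ hA.1.eigenvalues) *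
            (star hA.1.eigenvectorUnitary : Matrix (Fin d) (Fin d) ℂ) := by
            rw [hV1, Matrix.mul_one, diagonal_mul_diagonal]
            have hf : (fun i => ((Real.sqrt (hA.1.eigenvalues i) : ℝ) : ℂ) *
                ((Real.sqrt (hA.1.eigenvalues i) : ℝ) : ℂ)) = RCLike.ofReal ∘ hA.1.eigenvalues := by
              funext i
              rw [← Complex.ofReal_mul, Real.mul_self_sqrt (hA.eigenvalues_nonneg i)]
              rfl
            rw [hf]
        _ = Δᴴ * Δ := hA.1.spectral_theorem.symm
    open scoped MatrixOrder in
    rw [← (CFC.sqrt_eq_iff _ _ hA.nonneg hSpsd.nonneg).mpr (by rw [← sq]; exact hSsq),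
      (CFC.sqrt_eq_iff _ _ hA.nonneg hTpsd.nonneg).mpr hTT]
  have htraceUD : ∀ f : Fin d → ℝ,
      (U * diagonal (RCLike.ofReal ∘ f) * star U).trace = ∑ i, ((f i : ℝ) : ℂ) := by
    intro f
    rw [trace_mul_cycle, hU1, Matrix.one_mul, trace_diagonal]
    rfl
  have htn : traceNorm Δ = ∑ i, |lam i| := by
    rw [traceNorm, ← hsqrt, hSdef, htraceUD]
    simp
  -- the measurement coefficients
  set M : Matrix (Fin d) (Fin d) ℂ := star U * E * U with hMdef
  have hMpsd : M.PosSemidef := by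
    rw [hMdef, star_eq_conjTranspose U]
    exact hE.conjTranspose_mul_mul_same U
  have hM'psd : ((1 : Matrix (Fin d) (Fin d) ℂ) - M).PosSemidef := by
    have : (1 : Matrix (Fin d) (Fin d) ℂ) - M = star U * (1 - E) * U := by
      rw [Matrix.mul_sub, Matrix.sub_mul, Matrix.mul_one, hU1, hMdef]
    rw [this, star_eq_conjTranspose U]
    exact hE'.conjTranspose_mul_mul_same U
  have hdiag_nonneg : ∀ (N : Matrix (Fin d) (Fin d) ℂ), N.PosSemidef → ∀ i, 0 ≤ (N i i).re := by
    intro N hN i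
    have := hN.re_dotProduct_nonneg (Pi.single i 1)
    simpa [dotProduct, mulVec, Pi.single_apply, Finset.sum_ite_eq, mul_comm] using this
  have hc0 : ∀ i, 0 ≤ (M i i).re := hdiag_nonneg M hMpsd
  have hc1 : ∀ i, (M i i).re ≤ 1 := by
    intro i
    have := hdiag_nonneg _ hM'psd i
    simp only [Matrix.sub_apply, Matrix.one_apply_eq, Complex.sub_re, Complex.one_re] at this
    linarith
  -- trace identities
  have htrEΔ : (E * Δ).trace.re = ∑ i, (M i i).re * lam i := by
    have h1 : (E * Δ).trace = (M * diagonal (RCLike.ofReal ∘ lam)).trace := by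
      rw [hspec, hMdef, ← Matrix.mul_assoc, ← Matrix.mul_assoc,
        trace_mul_cycle (E * U) (diagonal (RCLike.ofReal ∘ lam)) (star U),
        ← Matrix.mul_assoc (star U) E U]
    rw [h1]
    rw [Matrix.trace]
    simp only [Matrix.diag, Matrix.mul_diagonal]
    rw [Complex.re_sum]
    congr 1
    funext i
    have : (RCLike.ofReal ∘ lam) i = ((lam i : ℝ) : ℂ) := rfl
    rw [this, mul_comm, Complex.re_ofReal_mul, mul_comm]
  have hsumlam : ∑ i, lam i = 2 * q - 1 := by
    have h1 : Δ.trace = ∑ i, ((lam i : ℝ) : ℂ) := by rw [hspec, htraceUD]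
    have h2 : Δ.trace = ((2 * q - 1 : ℝ) : ℂ) := by
      rw [hΔdef, trace_sub, trace_smul, trace_smul, htr₁, htr₂]
      simp only [smul_eq_mul, mul_one]
      push_cast
      ring
    have := h1.symm.trans h2
    have := congrArg Complex.re this
    rw [Complex.re_sum] at this
    simpa using this
  -- linear algebra of the LHS
  have hEΔ : (E * Δ).trace = (q : ℂ) * (E * ρ₁).trace - ((1 - q : ℝ) : ℂ) * (E * ρ₂).trace := by
    rw [hΔdef, Matrix.mul_sub, trace_sub, Matrix.mul_smul, Matrix.mul_smul,
      trace_smul, trace_smul, smul_eq_mul, smul_eq_mul]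
  have h1E : ((1 - E) * ρ₂).trace = ρ₂.trace - (E * ρ₂).trace := by
    rw [Matrix.sub_mul, Matrix.one_mul, trace_sub]
  have hre : (E * Δ).trace.re = q * (E * ρ₁).trace.re - (1 - q) * (E * ρ₂).trace.re := by
    rw [hEΔ, Complex.sub_re, Complex.re_ofReal_mul, Complex.re_ofReal_mul]
  have hLHS : q * ((E * ρ₁).trace.re) + (1 - q) * (((1 - E) * ρ₂).trace.re)
      = (1 - q) + (E * Δ).trace.re := by
    rw [hre, h1E, htr₂]
    simp only [Complex.sub_re, Complex.one_re]
    ring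
  -- the key bound
  have hbound : ∑ i, (M i i).re * lam i ≤ ∑ i, (|lam i| + lam i) / 2 := by
    apply Finset.sum_le_sum
    intro i _
    rcases le_or_gt 0 (lam i) with h | h
    · rw [abs_of_nonneg h]
      nlinarith [hc0 i, hc1 i]
    · rw [abs_of_neg h]
      nlinarith [hc0 i, hc1 i]
  have hsum2 : ∑ i, (|lam i| + lam i) / 2 = (traceNorm Δ + (2 * q - 1)) / 2 := by
    rw [htn, ← hsumlam, ← Finset.sum_add_distrib, ← Finset.sum_div]
  rw [hLHS, htrEΔ]
  calc (1 - q) + ∑ i, (M i i).re * lam i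
      ≤ (1 - q) + (traceNorm Δ + (2 * q - 1)) / 2 := by
        rw [← hsum2]; linarith [hbound]
    _ = (1 + traceNorm Δ) / 2 := by ring
end

section
/- For the trine ensemble with uniform priors on a single qubit, any POVM has success probability at most 2/3, so the optimal single-copy (locally greedy per-copy) success probability is 2/3; consequently on n copies measured independently and greedily the success probability is bounded by quantities strictly less than the collective optimum (3+2√2)/6 for n = 2. -/
open scoped ComplexOrder
open Matrix

/-- The trine qubit state `|ψⱼ⟩ = (cos(2πj/3), sin(2πj/3))ᵀ`. -/
noncomputable def trine (j : Fin 3) : Fin 2 → ℂ :=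
  ![(Real.cos (2 * Real.pi * j / 3) : ℂ), (Real.sin (2 * Real.pi * j / 3) : ℂ)]

/-- The rank-one outer product `|ψⱼ⟩⟨ψⱼ|`. -/
noncomputable def trineProj (j : Fin 3) : Matrix (Fin 2) (Fin 2) ℂ :=
  vecMulVec (trine j) (star (trine j))

private lemma tr_bound (E : Matrix (Fin 2) (Fin 2) ℂ) (hE : E.PosSemidef) (c s : ℝ)
    (h : c^2 + s^2 = 1) :
    (E * vecMulVec ![(c:ℂ),(s:ℂ)] (star ![(c:ℂ),(s:ℂ)])).trace.re
      ≤ (E 0 0).re + (E 1 1).re := by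
  have h2 := hE.dotProduct_mulVec_nonneg ![(-s:ℂ), (c:ℂ)]
  rw [Complex.le_def] at h2
  obtain ⟨h2, -⟩ := h2
  simp only [dotProduct, mulVec, Fin.sum_univ_two, Matrix.trace, Matrix.mul_apply,
    vecMulVec_apply, Pi.star_apply, Matrix.cons_val_zero, Matrix.cons_val_one, Matrix.head_cons,
    Matrix.diag_apply, Complex.zero_re] at h2 ⊢
  have h10 : E 1 0 = star (E 0 1) := by
    have := hE.1
    rw [Matrix.IsHermitian] at this
    have := congrFun (congrFun this 1) 0
    simpa [Matrix.conjTranspose_apply] using this.symm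
  rw [h10] at h2 ⊢
  simp only [Complex.add_re, Complex.mul_re, Complex.ofReal_re, Complex.ofReal_im,
    Complex.conj_re, Complex.conj_im, Complex.neg_re, Complex.neg_im, RCLike.star_def,
    Complex.mul_im] at h2 ⊢
  ring_nf at h2 ⊢
  have e1 : (E 0 0).re * c ^ 2 + (E 0 0).re * s ^ 2 = (E 0 0).re := by
    rw [← mul_add, h, mul_one]
  have e2 : (E 1 1).re * c ^ 2 + (E 1 1).re * s ^ 2 = (E 1 1).re := by
    rw [← mul_add, h, mul_one]
  linarith [h2, e1, e2]

private lemma psd_smul_vmv (v : Fin 2 → ℂ) (c : ℝ) (hc : 0 ≤ c) :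
    ((c : ℂ) • vecMulVec v (star v)).PosSemidef := by
  refine Matrix.PosSemidef.of_dotProduct_mulVec_nonneg ?_ ?_
  · ext i k
    simp only [conjTranspose_apply, Matrix.smul_apply, vecMulVec_apply, Pi.star_apply, star_mul',
      smul_eq_mul, star_star, RCLike.star_def, _root_.map_mul, Complex.conj_conj,
      Complex.conj_ofReal]
    ring
  · intro x
    have key : star x ⬝ᵥ (((c : ℂ) • vecMulVec v (star v)) *ᵥ x)
        = (c : ℂ) * (star (star v ⬝ᵥ x) * (star v ⬝ᵥ x)) := by
      simp only [dotProduct, mulVec, Fin.sum_univ_two, Matrix.smul_apply, vecMulVec_apply,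
        Pi.star_apply, smul_eq_mul, RCLike.star_def, map_add, _root_.map_mul, Complex.conj_conj]
      ring
    rw [key]
    exact mul_nonneg (by exact_mod_cast Complex.zero_le_real.mpr hc)
      (star_mul_self_nonneg _)

private lemma trine0 : trine 0 = ![((1:ℝ):ℂ), ((0:ℝ):ℂ)] := by
  funext i; fin_cases i <;> simp [trine]

private lemma trine1 : trine 1 = ![((-(1/2):ℝ):ℂ), ((Real.sqrt 3 / 2 : ℝ):ℂ)] := by
  have e : (((1:Fin 3):ℕ):ℝ) = 1 := by norm_num
  have hc : Real.cos (2 * Real.pi * (((1:Fin 3):ℕ):ℝ) / 3) = -(1/2) := by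
    rw [e, show 2 * Real.pi * 1 / 3 = Real.pi - Real.pi / 3 by ring, Real.cos_pi_sub,
      Real.cos_pi_div_three]
  have hs : Real.sin (2 * Real.pi * (((1:Fin 3):ℕ):ℝ) / 3) = Real.sqrt 3 / 2 := by
    rw [e, show 2 * Real.pi * 1 / 3 = Real.pi - Real.pi / 3 by ring, Real.sin_pi_sub,
      Real.sin_pi_div_three]
  funext i
  fin_cases i <;> simp only [trine, Matrix.cons_val_zero, Matrix.cons_val_one,
    Matrix.head_cons, hc, hs]

private lemma trine2 : trine 2 = ![((-(1/2):ℝ):ℂ), ((-(Real.sqrt 3) / 2 : ℝ):ℂ)] := by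
  have e : (((2:Fin 3):ℕ):ℝ) = 2 := by norm_num
  have hc : Real.cos (2 * Real.pi * (((2:Fin 3):ℕ):ℝ) / 3) = -(1/2) := by
    rw [e, show 2 * Real.pi * 2 / 3 = Real.pi + Real.pi / 3 by ring, Real.cos_add,
      Real.cos_pi, Real.sin_pi, Real.cos_pi_div_three]
    ring
  have hs : Real.sin (2 * Real.pi * (((2:Fin 3):ℕ):ℝ) / 3) = -(Real.sqrt 3) / 2 := by
    rw [e, show 2 * Real.pi * 2 / 3 = Real.pi + Real.pi / 3 by ring, Real.sin_add,
      Real.sin_pi, Real.cos_pi, Real.sin_pi_div_three]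
    ring
  funext i
  fin_cases i <;> simp only [trine, Matrix.cons_val_zero, Matrix.cons_val_one,
    Matrix.head_cons, hc, hs]

/-- For the trine ensemble with uniform priors: every POVM on a single qubit has success
probability at most `2/3`, this value is achieved by some POVM (so the optimal single-copy
success probability is `2/3`), and `2/3` is strictly less than the collective optimum
`(3 + 2√2)/6` for two copies. -/
theorem trine_single_copy_optimum :
    (∀ E : Fin 3 → Matrix (Fin 2) (Fin 2) ℂ,
      (∀ j, (E j).PosSemidef) → (∑ j, E j = 1) →
      ∑ j, (1/3 : ℝ) * ((E j * trineProj j).trace.re) ≤ 2/3) ∧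
    (∃ E : Fin 3 → Matrix (Fin 2) (Fin 2) ℂ,
      (∀ j, (E j).PosSemidef) ∧ (∑ j, E j = 1) ∧
      ∑ j, (1/3 : ℝ) * ((E j * trineProj j).trace.re) = 2/3) ∧
    (2/3 : ℝ) < (3 + 2 * Real.sqrt 2) / 6 := by
  have h3 : Real.sqrt 3 * Real.sqrt 3 = 3 := Real.mul_self_sqrt (by norm_num)
  have h3c : (Real.sqrt 3 : ℂ) * (Real.sqrt 3 : ℂ) = 3 := by exact_mod_cast h3
  refine ⟨?_, ?_, ?_⟩
  · intro E hpsd hsum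
    have hb : ∀ j : Fin 3, (E j * trineProj j).trace.re
        ≤ (E j 0 0).re + (E j 1 1).re := by
      intro j
      have := tr_bound (E j) (hpsd j) (Real.cos (2 * Real.pi * ((j : ℕ) : ℝ) / 3))
        (Real.sin (2 * Real.pi * ((j : ℕ) : ℝ) / 3)) (Real.cos_sq_add_sin_sq _)
      simpa [trineProj, trine] using this
    have h00 : ∑ j : Fin 3, (E j 0 0).re = 1 := by
      have hh : (∑ j, E j) 0 0 = (1 : Matrix (Fin 2) (Fin 2) ℂ) 0 0 := by rw [hsum]
      rw [Matrix.sum_apply] at hh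
      have := congrArg Complex.re hh
      simpa [Complex.re_sum, Matrix.one_apply] using this
    have h11 : ∑ j : Fin 3, (E j 1 1).re = 1 := by
      have hh : (∑ j, E j) 1 1 = (1 : Matrix (Fin 2) (Fin 2) ℂ) 1 1 := by rw [hsum]
      rw [Matrix.sum_apply] at hh
      have := congrArg Complex.re hh
      simpa [Complex.re_sum, Matrix.one_apply] using this
    rw [Fin.sum_univ_three] at h00 h11 ⊢
    have b0 := hb 0; have b1 := hb 1; have b2 := hb 2
    linarith
  · refine ⟨fun j => ((2/3 : ℝ) : ℂ) • trineProj j,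
      fun j => by simpa [trineProj] using psd_smul_vmv (trine j) (2/3) (by norm_num),
      ?_, ?_⟩
    · ext i k
      rw [Matrix.sum_apply, Fin.sum_univ_three]
      fin_cases i <;> fin_cases k <;>
        · simp only [trineProj, trine0, trine1, trine2, Matrix.smul_apply, vecMulVec_apply,
            Pi.star_apply, Matrix.cons_val_zero, Matrix.cons_val_one, Matrix.head_cons,
            RCLike.star_def, Complex.conj_ofReal, smul_eq_mul, ← Complex.ofReal_mul,
            ← Complex.ofReal_add, Matrix.one_apply, Fin.mk_zero, Fin.mk_one]
          push_cast
          try ring1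
          try linear_combination (1/3 : ℂ) * h3c
          try norm_num
    · rw [Fin.sum_univ_three]
      simp only [trineProj, trine0, trine1, trine2, Matrix.trace, Matrix.diag_apply,
        Matrix.mul_apply, Matrix.smul_apply, vecMulVec_apply, Pi.star_apply,
        Matrix.cons_val_zero, Matrix.cons_val_one, Matrix.head_cons, RCLike.star_def,
        Complex.conj_ofReal, smul_eq_mul, Fin.sum_univ_two, ← Complex.ofReal_mul,
        ← Complex.ofReal_add, Complex.ofReal_re]
      have h9 : Real.sqrt 3 * Real.sqrt 3 * (Real.sqrt 3 * Real.sqrt 3) = 9 := by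
        rw [h3]; norm_num
      ring_nf
      ring_nf at h3 h9
      linarith [h3, h9]
  · have h2 : (1.4 : ℝ) < Real.sqrt 2 := by
      rw [show (1.4 : ℝ) = Real.sqrt (1.96) by
        rw [show (1.96 : ℝ) = 1.4 ^ 2 by norm_num, Real.sqrt_sq]; norm_num]
      exact Real.sqrt_lt_sqrt (by norm_num) (by norm_num)
    linarith
end
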